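/- The linear cardiovascular system dv/dt = Mv + b, with M = [[−1/(R_S C_SA), 1/(R_S C_SV), F C_L/C_PV], [1/(R_S C_SA), −(1/(R_S C_SV) + F C_R/C_SV), 0], [−1/(R_P C_PA), −1/(R_P C_PA), −(1/(R_P C_PA) + 1/(R_P C_PV) + F C_L/C_PV)]], has the property that M has strictly negative trace and strictly negative determinant for all positive values of the parameters R_S, R_P, C_SA, C_SV, C_PA, C_PV, C_L, C_R, F. -/

import Mathlib

open Matrix

/-- The coefficient matrix `M` of the three-variable linear cardiovascular
model has strictly negative trace and strictly negative determinant for all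
positive parameter values. -/
theorem linear_model_trace_det_negative
    (CSA CSV CPA CPV CL CR RS RP F : ℝ)
    (hCSA : 0 < CSA) (hCSV : 0 < CSV) (hCPA : 0 < CPA) (hCPV : 0 < CPV)
    (hCL : 0 < CL) (hCR : 0 < CR) (hRS : 0 < RS) (hRP : 0 < RP) (hF : 0 < F)
    (M : Matrix (Fin 3) (Fin 3) ℝ)
    (hM : M = !![-(1 / (RS * CSA)), 1 / (RS * CSV), F * CL / CPV;
                 1 / (RS * CSA), -(1 / (RS * CSV) + F * CR / CSV), 0;
                 -(1 / (RP * CPA)), -(1 / (RP * CPA)),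
                   -(1 / (RP * CPA) + 1 / (RP * CPV) + F * CL / CPV)]) :
    M.trace < 0 ∧ M.det < 0 := by
  subst hM
  have ha : 0 < CSA⁻¹ * RS⁻¹ := by positivity
  have hb : 0 < CSV⁻¹ * RS⁻¹ := by positivity
  have hc : 0 < F * CR / CSV := by positivity
  have hd : 0 < F * CL / CPV := by positivity
  have he : 0 < CPA⁻¹ * RP⁻¹ := by positivity
  have hf2 : 0 < CPV⁻¹ * RP⁻¹ := by positivity
  constructor
  · rw [Matrix.trace_fin_three]
    simp
    norm_num
    nlinarith
  · rw [Matrix.det_fin_three]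
    simp
    norm_num
    nlinarith [mul_pos (mul_pos ha hc) he, mul_pos (mul_pos ha hc) hf2,
      mul_pos (mul_pos ha hc) hd, mul_pos (mul_pos hd he) ha,
      mul_pos (mul_pos hd he) hb, mul_pos (mul_pos hd he) hc]
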